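/- arXiv:1711.01139 — 4 statements merged into one kernel-verified Lean document; each statement's English description precedes it below -/
import Mathlib

section
/- Let y : [0,T] → ℝ^n be absolutely continuous and satisfy, for almost every t, (1/2) d/dt |y(t) - y_T|² + ργC₁|y(t) - y_T| ≤ C₂(|y(t) - y_T| + |y_T|)|y(t) - y_T|, where ρ, γ, C₁, C₂ > 0 and y_T ∈ ℝ^n. If ργC₁ > C₂|y_T| and (ργC₁ - C₂|y_T|)(C₂)^{-1}(1 - e^{-C₂ T}) ≥ |y(0) - y_T|, then y(T) = y_T. -/
open RealInnerProductSpace MeasureTheory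

/-- If `g` is differentiable on `[a,b]` with derivative `g'` and `g' ≤ 0` a.e. on `(a,b)`,
then `g b ≤ g a`. -/
lemma aux_le_of_deriv_ae_nonpos {a b : ℝ} (hab : a ≤ b) {g g' : ℝ → ℝ}
    (hderiv : ∀ x ∈ Set.Icc a b, HasDerivAt g (g' x) x)
    (hle : ∀ᵐ x ∂(volume.restrict (Set.Ioo a b)), g' x ≤ 0) :
    g b ≤ g a := by
  set φ : ℝ → ℝ := fun x => max (g' x) 0 with hφ
  have hφ0 : ∀ᵐ x ∂(volume.restrict (Set.Ioo a b)), φ x = 0 :=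
    hle.mono fun x hx => max_eq_right hx
  have hIcc : ∀ᵐ x ∂(volume.restrict (Set.Icc a b)), φ x = 0 := by
    rwa [Measure.restrict_congr_set Ioo_ae_eq_Icc] at hφ0
  have hIcc' : φ =ᵐ[volume.restrict (Set.Icc a b)] (fun _ => 0) := hIcc
  have φint : IntegrableOn φ (Set.Icc a b) :=
    (integrable_zero _ _ _).congr hIcc'.symm
  have key := intervalIntegral.sub_le_integral_of_hasDeriv_right_of_le hab
      (fun x hx => (hderiv x hx).continuousAt.continuousWithinAt)
      (fun x hx => (hderiv x (Set.Ioo_subset_Icc_self hx)).hasDerivWithinAt)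
      φint (fun x _ => le_max_left _ _)
  have hzero : (∫ x in a..b, φ x) = 0 := by
    rw [intervalIntegral.integral_of_le hab]
    have hIoc : ∀ᵐ x ∂(volume.restrict (Set.Ioc a b)), φ x = 0 := by
      rwa [Measure.restrict_congr_set Ioo_ae_eq_Ioc] at hφ0
    have h0 : ∫ x in Set.Ioc a b, φ x ∂volume = ∫ x in Set.Ioc a b, (0 : ℝ) ∂volume :=
      setIntegral_congr_ae measurableSet_Ioc ((ae_restrict_iff' measurableSet_Ioc).1 hIoc)
    rw [h0]; simp
  rw [hzero] at key
  linarith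

/-- Deterministic extinction argument: if `y` satisfies the differential inequality
`(1/2) d/dt ‖y(t) - y_T‖² + ργC₁‖y(t) - y_T‖ ≤ C₂(‖y(t) - y_T‖ + ‖y_T‖)‖y(t) - y_T‖`
a.e. on `(0,T)`, with `ργC₁ > C₂‖y_T‖` and
`(ργC₁ - C₂‖y_T‖) C₂⁻¹ (1 - e^{-C₂ T}) ≥ ‖y 0 - y_T‖`, then `y T = y_T`. -/
theorem extinction_in_finite_time {n : ℕ}
    (T ρ γ C₁ C₂ : ℝ) (hT : 0 < T) (hρ : 0 < ρ) (hγ : 0 < γ)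
    (hC₁ : 0 < C₁) (hC₂ : 0 < C₂)
    (yT : EuclideanSpace ℝ (Fin n))
    (y y' : ℝ → EuclideanSpace ℝ (Fin n))
    (hderiv : ∀ t ∈ Set.Icc (0 : ℝ) T, HasDerivAt y (y' t) t)
    (hineq : ∀ᵐ t ∂(volume.restrict (Set.Ioo (0 : ℝ) T)),
      ⟪y' t, y t - yT⟫ + ρ * γ * C₁ * ‖y t - yT‖ ≤
        C₂ * (‖y t - yT‖ + ‖yT‖) * ‖y t - yT‖)
    (hbig : ρ * γ * C₁ > C₂ * ‖yT‖)
    (hinit : (ρ * γ * C₁ - C₂ * ‖yT‖) * C₂⁻¹ * (1 - Real.exp (-C₂ * T)) ≥ ‖y 0 - yT‖) :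
    y T = yT := by
  have hA : 0 < ρ * γ * C₁ - C₂ * ‖yT‖ := sub_pos.2 hbig
  set A : ℝ := ρ * γ * C₁ - C₂ * ‖yT‖ with hAdef
  set u : ℝ → ℝ := fun t => ‖y t - yT‖ ^ 2 with hudef
  -- derivative of u
  have hu' : ∀ t ∈ Set.Icc (0 : ℝ) T,
      HasDerivAt u (2 * ⟪y' t, y t - yT⟫) t := by
    intro t ht
    have h1 : HasDerivAt (fun s => y s - yT) (y' t) t := (hderiv t ht).sub_const yT
    have h2 := h1.inner ℝ h1
    have heq : (fun s => ⟪y s - yT, y s - yT⟫) = u := by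
      funext s
      rw [hudef, real_inner_self_eq_norm_sq]
    rw [heq] at h2
    refine h2.congr_deriv ?_
    rw [real_inner_comm (y t - yT) (y' t)]
    ring
  -- a.e. bound on the derivative of u
  have huineq : ∀ᵐ t ∂(volume.restrict (Set.Ioo (0 : ℝ) T)),
      2 * ⟪y' t, y t - yT⟫ ≤ 2 * C₂ * u t - 2 * A * ‖y t - yT‖ := by
    filter_upwards [hineq] with t ht
    have : ⟪y' t, y t - yT⟫ ≤ C₂ * ‖y t - yT‖ ^ 2 - A * ‖y t - yT‖ := by
      rw [hAdef]; nlinarith [ht]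
    show 2 * ⟪y' t, y t - yT⟫ ≤ 2 * C₂ * ‖y t - yT‖ ^ 2 - 2 * A * ‖y t - yT‖
    nlinarith [this]
  have hu_nonneg : ∀ t, 0 ≤ u t := fun t => sq_nonneg _
  by_cases hzero : ∃ t₀ ∈ Set.Icc (0 : ℝ) T, y t₀ = yT
  · -- once zero, stays zero: use G t = exp (-(2C₂)t) * u t nonincreasing
    obtain ⟨t₀, ht₀, hy0⟩ := hzero
    set G : ℝ → ℝ := fun t => Real.exp (-(2 * C₂) * t) * u t with hGdef
    set G' : ℝ → ℝ := fun t =>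
      -(2 * C₂) * Real.exp (-(2 * C₂) * t) * u t +
        Real.exp (-(2 * C₂) * t) * (2 * ⟪y' t, y t - yT⟫) with hG'def
    have hGderiv : ∀ t ∈ Set.Icc t₀ T, HasDerivAt G (G' t) t := by
      intro t ht
      have hE : HasDerivAt (fun s => Real.exp (-(2 * C₂) * s))
          (-(2 * C₂) * Real.exp (-(2 * C₂) * t)) t := by
        have h1 : HasDerivAt (fun s : ℝ => -(2 * C₂) * s) (-(2 * C₂)) t := by
          simpa using (hasDerivAt_id t).const_mul (-(2 * C₂))
        convert h1.exp using 1
        ring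
      exact hE.mul (hu' t ⟨ht₀.1.trans ht.1, ht.2⟩)
    have hGle : ∀ᵐ t ∂(volume.restrict (Set.Ioo t₀ T)), G' t ≤ 0 := by
      have hsub : Set.Ioo t₀ T ⊆ Set.Ioo (0 : ℝ) T := fun x hx =>
        ⟨lt_of_le_of_lt ht₀.1 hx.1, hx.2⟩
      filter_upwards [ae_restrict_of_ae_restrict_of_subset hsub huineq] with t ht
      have hE : 0 < Real.exp (-(2 * C₂) * t) := Real.exp_pos _
      have hnn : 0 ≤ ‖y t - yT‖ := norm_nonneg _
      have hu_eq : u t = ‖y t - yT‖ ^ 2 := rfl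
      show -(2 * C₂) * Real.exp (-(2 * C₂) * t) * u t +
        Real.exp (-(2 * C₂) * t) * (2 * ⟪y' t, y t - yT⟫) ≤ 0
      rw [hu_eq]; rw [hu_eq] at ht
      have h1 := mul_le_mul_of_nonneg_left ht hE.le
      nlinarith [h1, mul_nonneg (mul_nonneg hA.le hE.le) hnn]
    have hmono := aux_le_of_deriv_ae_nonpos ht₀.2 hGderiv hGle
    have hGt₀ : G t₀ = 0 := by
      rw [hGdef]; simp only [hudef]; rw [hy0]; simp
    have hGT : 0 ≤ G T := mul_nonneg (Real.exp_pos _).le (hu_nonneg T)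
    have huT : u T = 0 := by
      have : G T = 0 := le_antisymm (hGt₀ ▸ hmono) hGT
      have hE : Real.exp (-(2 * C₂) * T) ≠ 0 := (Real.exp_pos _).ne'
      exact (mul_eq_zero.1 this).resolve_left hE
    have : ‖y T - yT‖ = 0 := by
      have := pow_eq_zero_iff (n := 2) (by norm_num) |>.1 huT
      exact this
    rw [norm_eq_zero, sub_eq_zero] at this
    exact this
  · -- no zero on [0,T]: comparison with explicit solution forces a zero at T, contradiction
    push_neg at hzero
    have hpos : ∀ t ∈ Set.Icc (0 : ℝ) T, 0 < ‖y t - yT‖ := fun t ht =>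
      norm_pos_iff.2 (sub_ne_zero.2 (hzero t ht))
    set F : ℝ → ℝ := fun t => Real.sqrt (u t) with hFdef
    have hFeq : ∀ t, F t = ‖y t - yT‖ := fun t => by
      rw [hFdef, hudef]; exact Real.sqrt_sq (norm_nonneg _)
    have hFderiv : ∀ t ∈ Set.Icc (0 : ℝ) T,
        HasDerivAt F (1 / (2 * Real.sqrt (u t)) * (2 * ⟪y' t, y t - yT⟫)) t := by
      intro t ht
      have hne : u t ≠ 0 := by
        rw [hudef]; exact pow_ne_zero 2 (ne_of_gt (hpos t ht))
      exact (Real.hasDerivAt_sqrt hne).comp t (hu' t ht)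
    set g : ℝ → ℝ := fun t =>
      Real.exp (-C₂ * t) * F t + A / C₂ * (1 - Real.exp (-C₂ * t)) with hgdef
    set g' : ℝ → ℝ := fun t =>
      (-C₂ * Real.exp (-C₂ * t)) * F t +
        Real.exp (-C₂ * t) * (1 / (2 * Real.sqrt (u t)) * (2 * ⟪y' t, y t - yT⟫)) +
        A / C₂ * (C₂ * Real.exp (-C₂ * t)) with hg'def
    have hgderiv : ∀ t ∈ Set.Icc (0 : ℝ) T, HasDerivAt g (g' t) t := by
      intro t ht
      have hE : HasDerivAt (fun s => Real.exp (-C₂ * s))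
          (-C₂ * Real.exp (-C₂ * t)) t := by
        have h1 : HasDerivAt (fun s : ℝ => -C₂ * s) (-C₂) t := by
          simpa using (hasDerivAt_id t).const_mul (-C₂)
        convert h1.exp using 1
        ring
      have h1 := hE.mul (hFderiv t ht)
      have h2 : HasDerivAt (fun s => A / C₂ * (1 - Real.exp (-C₂ * s)))
          (A / C₂ * (C₂ * Real.exp (-C₂ * t))) t := by
        have h3 : HasDerivAt (fun s => 1 - Real.exp (-C₂ * s))
            (C₂ * Real.exp (-C₂ * t)) t := by
          have := (hasDerivAt_const t (1 : ℝ)).sub hE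
          exact this.congr_deriv (by ring)
        exact h3.const_mul (A / C₂)
      exact h1.add h2
    have hgle : ∀ᵐ t ∂(volume.restrict (Set.Ioo (0 : ℝ) T)), g' t ≤ 0 := by
      have hmem : ∀ᵐ t ∂(volume.restrict (Set.Ioo (0 : ℝ) T)), t ∈ Set.Ioo (0 : ℝ) T :=
        ae_restrict_mem measurableSet_Ioo
      filter_upwards [huineq, hmem] with t ht htmem
      have htIcc : t ∈ Set.Icc (0 : ℝ) T := ⟨htmem.1.le, htmem.2.le⟩
      have hf : 0 < ‖y t - yT‖ := hpos t htIcc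
      have hEpos : 0 < Real.exp (-C₂ * t) := Real.exp_pos _
      have hsq : Real.sqrt (u t) = ‖y t - yT‖ := hFeq t
      have hu_eq : u t = ‖y t - yT‖ ^ 2 := rfl
      rw [hg'def]
      simp only [hsq, hFeq]
      -- g' t = E * (inner/f - C₂ f + A); inner ≤ C₂ f² - A f
      have hinner : ⟪y' t, y t - yT⟫ ≤ C₂ * ‖y t - yT‖ ^ 2 - A * ‖y t - yT‖ := by
        rw [hu_eq] at ht; nlinarith [ht]
      have hdiv : A / C₂ * (C₂ * Real.exp (-C₂ * t)) = A * Real.exp (-C₂ * t) := by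
        field_simp
      rw [hdiv]
      have h1 : 1 / (2 * ‖y t - yT‖) * (2 * ⟪y' t, y t - yT⟫) =
          ⟪y' t, y t - yT⟫ / ‖y t - yT‖ := by
        field_simp
      rw [h1]
      have h2 : ⟪y' t, y t - yT⟫ / ‖y t - yT‖ ≤ C₂ * ‖y t - yT‖ - A := by
        rw [div_le_iff₀ hf]; nlinarith [hinner]
      nlinarith [mul_le_mul_of_nonneg_left h2 hEpos.le]
    have hmono := aux_le_of_deriv_ae_nonpos hT.le hgderiv hgle
    have hg0 : g 0 = ‖y 0 - yT‖ := by
      rw [hgdef]; simp [hFeq 0]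
    have hgT : g T = Real.exp (-C₂ * T) * ‖y T - yT‖ +
        A / C₂ * (1 - Real.exp (-C₂ * T)) := by
      rw [hgdef]; simp [hFeq T]
    have hinit' : ‖y 0 - yT‖ ≤ A / C₂ * (1 - Real.exp (-C₂ * T)) := by
      rw [hAdef] at *
      calc ‖y 0 - yT‖ ≤ (ρ * γ * C₁ - C₂ * ‖yT‖) * C₂⁻¹ * (1 - Real.exp (-C₂ * T)) := hinit
        _ = (ρ * γ * C₁ - C₂ * ‖yT‖) / C₂ * (1 - Real.exp (-C₂ * T)) := by
            rw [div_eq_mul_inv]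
    have hfinal : Real.exp (-C₂ * T) * ‖y T - yT‖ ≤ 0 := by
      rw [hgT, hg0] at hmono; linarith
    have hEpos : 0 < Real.exp (-C₂ * T) := Real.exp_pos _
    have : ‖y T - yT‖ ≤ 0 := by
      nlinarith [hfinal, norm_nonneg (y T - yT)]
    have hnorm : ‖y T - yT‖ = 0 := le_antisymm this (norm_nonneg _)
    rw [norm_eq_zero, sub_eq_zero] at hnorm
    exact hnorm
end

section
/- Let A, B ∈ L(ℝ^n) with B invertible, let y ∈ ℝ^n, ρ > 0, and let X : [0,T] → ℝ^n be absolutely continuous satisfying dX/dt + A X + ρ B ξ(t) = 0 a.e. with ξ(t) ∈ sign(B*(X(t) - y)) a.e. If X₁, X₂ are two such solutions with X₁(0) = X₂(0), then X₁ ≡ X₂ on [0,T]. -/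
open MeasureTheory

open Classical in
noncomputable def signSet {n : ℕ} (x : EuclideanSpace ℝ (Fin n)) : Set (EuclideanSpace ℝ (Fin n)) :=
  if x = 0 then {θ | ‖θ‖ ≤ 1} else {‖x‖⁻¹ • x}

lemma signSet_norm_le {n : ℕ} {x θ : EuclideanSpace ℝ (Fin n)} (h : θ ∈ signSet x) : ‖θ‖ ≤ 1 := by
  unfold signSet at h
  split_ifs at h with hx
  · exact h
  · rw [Set.mem_singleton_iff] at h; subst h
    rw [norm_smul, norm_inv, norm_norm, inv_mul_cancel₀ (norm_ne_zero_iff.mpr hx)]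

lemma signSet_inner {n : ℕ} {x θ : EuclideanSpace ℝ (Fin n)} (h : θ ∈ signSet x) :
    (inner ℝ θ x : ℝ) = ‖x‖ := by
  unfold signSet at h
  split_ifs at h with hx
  · simp [hx]
  · rw [Set.mem_singleton_iff] at h; subst h
    rw [real_inner_smul_left, real_inner_self_eq_norm_sq]
    have : ‖x‖ ≠ 0 := norm_ne_zero_iff.mpr hx
    field_simp

lemma signSet_mono {n : ℕ} {a b u v : EuclideanSpace ℝ (Fin n)}
    (hu : u ∈ signSet a) (hv : v ∈ signSet b) : 0 ≤ (inner ℝ (u - v) (a - b) : ℝ) := by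
  have h1 : (inner ℝ u a : ℝ) = ‖a‖ := signSet_inner hu
  have h2 : (inner ℝ v b : ℝ) = ‖b‖ := signSet_inner hv
  have h3 : (inner ℝ u b : ℝ) ≤ ‖b‖ := by
    calc (inner ℝ u b : ℝ) ≤ ‖u‖ * ‖b‖ := real_inner_le_norm u b
    _ ≤ 1 * ‖b‖ := mul_le_mul_of_nonneg_right (signSet_norm_le hu) (norm_nonneg b)
    _ = ‖b‖ := one_mul _
  have h4 : (inner ℝ v a : ℝ) ≤ ‖a‖ := by
    calc (inner ℝ v a : ℝ) ≤ ‖v‖ * ‖a‖ := real_inner_le_norm v a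
    _ ≤ 1 * ‖a‖ := mul_le_mul_of_nonneg_right (signSet_norm_le hv) (norm_nonneg a)
    _ = ‖a‖ := one_mul _
  rw [inner_sub_left, inner_sub_right, inner_sub_right]
  linarith

set_option maxHeartbeats 2000000 in
/-- Uniqueness for the deterministic closed loop system
`dX/dt + AX + ρ B ξ = 0`, `ξ(t) ∈ sign(B*(X(t) - y))`. -/
theorem closed_loop_uniqueness {n : ℕ}
    (T ρ : ℝ) (hT : 0 < T) (hρ : 0 < ρ)
    (A B : EuclideanSpace ℝ (Fin n) →L[ℝ] EuclideanSpace ℝ (Fin n))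
    (hB : Function.Bijective B)
    (y : EuclideanSpace ℝ (Fin n))
    (X₁ X₂ X₁' X₂' ξ₁ ξ₂ : ℝ → EuclideanSpace ℝ (Fin n))
    (hd₁ : ∀ t ∈ Set.Icc (0 : ℝ) T, HasDerivAt X₁ (X₁' t) t)
    (hd₂ : ∀ t ∈ Set.Icc (0 : ℝ) T, HasDerivAt X₂ (X₂' t) t)
    (hξ₁ : ∀ᵐ t ∂(volume.restrict (Set.Ioo (0 : ℝ) T)),
      ξ₁ t ∈ signSet (ContinuousLinearMap.adjoint B (X₁ t - y)) ∧
      X₁' t + A (X₁ t) + ρ • B (ξ₁ t) = 0)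
    (hξ₂ : ∀ᵐ t ∂(volume.restrict (Set.Ioo (0 : ℝ) T)),
      ξ₂ t ∈ signSet (ContinuousLinearMap.adjoint B (X₂ t - y)) ∧
      X₂' t + A (X₂ t) + ρ • B (ξ₂ t) = 0)
    (h0 : X₁ 0 = X₂ 0) :
    ∀ t ∈ Set.Icc (0 : ℝ) T, X₁ t = X₂ t := by
  set K : ℝ := ‖A‖ with hKdef
  have hK0 : 0 ≤ K := norm_nonneg A
  set Z : ℝ → EuclideanSpace ℝ (Fin n) := fun t => X₁ t - X₂ t with hZdef
  set φ : ℝ → ℝ := fun t => (inner ℝ (Z t) (Z t) : ℝ) with hφdef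
  -- basic facts about φ
  have hφ0 : φ 0 = 0 := by simp [hφdef, hZdef, h0]
  have hφnonneg : ∀ t, 0 ≤ φ t := fun t => real_inner_self_nonneg
  have hZd : ∀ t ∈ Set.Icc (0 : ℝ) T, HasDerivAt Z (X₁' t - X₂' t) t :=
    fun t ht => (hd₁ t ht).sub (hd₂ t ht)
  have hφd : ∀ t ∈ Set.Icc (0 : ℝ) T,
      HasDerivAt φ (2 * (inner ℝ (X₁' t - X₂' t) (Z t) : ℝ)) t := by
    intro t ht
    have h := (hZd t ht).inner ℝ (hZd t ht)
    have : (inner ℝ (Z t) (X₁' t - X₂' t) : ℝ) + inner ℝ (X₁' t - X₂' t) (Z t)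
        = 2 * (inner ℝ (X₁' t - X₂' t) (Z t) : ℝ) := by
      rw [real_inner_comm]; ring
    rwa [this] at h
  have hφderiv : ∀ t ∈ Set.Icc (0 : ℝ) T,
      deriv φ t = 2 * (inner ℝ (X₁' t - X₂' t) (Z t) : ℝ) := fun t ht => (hφd t ht).deriv
  -- continuity and bound for Z
  have hZcont : ContinuousOn Z (Set.Icc 0 T) :=
    fun t ht => ((hZd t ht).continuousAt).continuousWithinAt
  have hφcont : ContinuousOn φ (Set.Icc 0 T) := by
    exact fun t ht => ((hφd t ht).continuousAt).continuousWithinAt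
  obtain ⟨M, hM⟩ := isCompact_Icc.exists_bound_of_continuousOn hZcont
  have hM0 : 0 ≤ M := (norm_nonneg _).trans (hM 0 (Set.left_mem_Icc.mpr hT.le))
  set C : ℝ := 2 * (K * M + 2 * ρ * ‖B‖) * M with hCdef
  -- key a.e. statement
  have key : ∀ᵐ t : ℝ, t ∈ Set.Ioo (0 : ℝ) T →
      deriv φ t ≤ 2 * K * φ t ∧ |deriv φ t| ≤ C := by
    have h1 := (ae_restrict_iff' measurableSet_Ioo).mp hξ₁
    have h2 := (ae_restrict_iff' measurableSet_Ioo).mp hξ₂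
    filter_upwards [h1, h2] with t h1 h2 ht
    obtain ⟨hm1, he1⟩ := h1 ht
    obtain ⟨hm2, he2⟩ := h2 ht
    have htIcc : t ∈ Set.Icc (0 : ℝ) T := Set.Ioo_subset_Icc_self ht
    have hZ' : X₁' t - X₂' t = -(A (Z t)) - ρ • B (ξ₁ t - ξ₂ t) := by
      rw [hZdef]; simp only [map_sub, smul_sub]
      have h : (X₁' t + A (X₁ t) + ρ • B (ξ₁ t)) - (X₂' t + A (X₂ t) + ρ • B (ξ₂ t)) = 0 := by
        rw [he1, he2, sub_zero]
      have := h
      abel_nf at this ⊢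
      linear_combination (norm := abel) this
    have hmono : 0 ≤ (inner ℝ (ξ₁ t - ξ₂ t) ((ContinuousLinearMap.adjoint B) (Z t)) : ℝ) := by
      have hZsplit : Z t = (X₁ t - y) - (X₂ t - y) := by rw [hZdef]; abel
      rw [hZsplit, map_sub]
      exact signSet_mono hm1 hm2
    have hadj : (inner ℝ (B (ξ₁ t - ξ₂ t)) (Z t) : ℝ)
        = (inner ℝ (ξ₁ t - ξ₂ t) ((ContinuousLinearMap.adjoint B) (Z t)) : ℝ) :=
      (ContinuousLinearMap.adjoint_inner_right B _ _).symm
    have hinner : (inner ℝ (X₁' t - X₂' t) (Z t) : ℝ)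
        = -(inner ℝ (A (Z t)) (Z t) : ℝ) - ρ * (inner ℝ (ξ₁ t - ξ₂ t) ((ContinuousLinearMap.adjoint B) (Z t)) : ℝ) := by
      rw [hZ', ← hadj]
      rw [inner_sub_left, inner_neg_left, real_inner_smul_left]
    have hAZ : |(inner ℝ (A (Z t)) (Z t) : ℝ)| ≤ K * ‖Z t‖ * ‖Z t‖ := by
      calc |(inner ℝ (A (Z t)) (Z t) : ℝ)| ≤ ‖A (Z t)‖ * ‖Z t‖ := abs_real_inner_le_norm _ _
      _ ≤ K * ‖Z t‖ * ‖Z t‖ :=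
        mul_le_mul_of_nonneg_right (A.le_opNorm _) (norm_nonneg _)
    have hφt : φ t = ‖Z t‖ * ‖Z t‖ := real_inner_self_eq_norm_mul_norm _
    constructor
    · rw [hφderiv t htIcc, hinner]
      have : ρ * (inner ℝ (ξ₁ t - ξ₂ t) ((ContinuousLinearMap.adjoint B) (Z t)) : ℝ) ≥ 0 :=
        mul_nonneg hρ.le hmono
      have habs := abs_le.mp hAZ
      rw [hφt]
      nlinarith
    · rw [hφderiv t htIcc]
      have hZb : ‖Z t‖ ≤ M := hM t htIcc
      have hξb : ‖ξ₁ t - ξ₂ t‖ ≤ 2 := by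
        calc ‖ξ₁ t - ξ₂ t‖ ≤ ‖ξ₁ t‖ + ‖ξ₂ t‖ := norm_sub_le _ _
        _ ≤ 1 + 1 := add_le_add (signSet_norm_le hm1) (signSet_norm_le hm2)
        _ = 2 := by norm_num
      have hZ'b : ‖X₁' t - X₂' t‖ ≤ K * M + 2 * ρ * ‖B‖ := by
        rw [hZ']
        calc ‖-(A (Z t)) - ρ • B (ξ₁ t - ξ₂ t)‖
            ≤ ‖A (Z t)‖ + ‖ρ • B (ξ₁ t - ξ₂ t)‖ := by
              rw [sub_eq_add_neg]
              exact (norm_add_le _ _).trans (by rw [norm_neg, norm_neg])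
        _ ≤ K * M + 2 * ρ * ‖B‖ := by
            have h1 : ‖A (Z t)‖ ≤ K * M := by
              calc ‖A (Z t)‖ ≤ K * ‖Z t‖ := A.le_opNorm _
              _ ≤ K * M := mul_le_mul_of_nonneg_left hZb hK0
            have h2 : ‖ρ • B (ξ₁ t - ξ₂ t)‖ ≤ 2 * ρ * ‖B‖ := by
              rw [norm_smul, Real.norm_eq_abs, abs_of_pos hρ]
              calc ρ * ‖B (ξ₁ t - ξ₂ t)‖ ≤ ρ * (‖B‖ * ‖ξ₁ t - ξ₂ t‖) :=
                mul_le_mul_of_nonneg_left (B.le_opNorm _) hρ.le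
              _ ≤ ρ * (‖B‖ * 2) := by
                  have := mul_le_mul_of_nonneg_left hξb (norm_nonneg B)
                  exact mul_le_mul_of_nonneg_left this hρ.le
              _ = 2 * ρ * ‖B‖ := by ring
            linarith
      calc |2 * (inner ℝ (X₁' t - X₂' t) (Z t) : ℝ)|
          = 2 * |(inner ℝ (X₁' t - X₂' t) (Z t) : ℝ)| := by rw [abs_mul]; norm_num
      _ ≤ 2 * (‖X₁' t - X₂' t‖ * ‖Z t‖) := by
          have := abs_real_inner_le_norm (X₁' t - X₂' t) (Z t)
          linarith
      _ ≤ 2 * ((K * M + 2 * ρ * ‖B‖) * M) := by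
          have hZ'0 : 0 ≤ ‖X₁' t - X₂' t‖ := norm_nonneg _
          have := mul_le_mul hZ'b hZb (norm_nonneg _) ((norm_nonneg _).trans hZ'b)
          linarith
      _ = C := by rw [hCdef]; ring

  -- measurability and integrability of deriv φ
  have hmeas : Measurable (deriv φ) := measurable_deriv φ
  have hne : ∀ c : ℝ, ∀ᵐ s : ℝ, s ≠ c := by
    intro c
    rw [MeasureTheory.ae_iff]
    simp [not_not]
  have hae_b : ∀ t ∈ Set.Icc (0 : ℝ) T, ∀ᵐ s ∂(volume.restrict (Set.Icc (0 : ℝ) t)),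
      deriv φ s ≤ 2 * K * φ s ∧ |deriv φ s| ≤ C := by
    intro t ht
    filter_upwards [ae_restrict_mem measurableSet_Icc, ae_restrict_of_ae key,
      ae_restrict_of_ae (hne 0), ae_restrict_of_ae (hne t)] with s hs hkey hs0 hst
    exact hkey ⟨lt_of_le_of_ne hs.1 (Ne.symm hs0),
      lt_of_lt_of_le (lt_of_le_of_ne hs.2 hst) ht.2⟩
  have hint : ∀ t ∈ Set.Icc (0 : ℝ) T, IntervalIntegrable (deriv φ) volume 0 t := by
    intro t ht
    rw [intervalIntegrable_iff_integrableOn_Ioc_of_le ht.1]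
    refine Integrable.mono' (integrable_const C) (hmeas.aestronglyMeasurable.restrict) ?_
    have := (hae_b t ht).filter_mono
      (ae_mono (Measure.restrict_mono Set.Ioc_subset_Icc_self le_rfl))
    filter_upwards [this] with s hs
    simpa [Real.norm_eq_abs] using hs.2
  have hφint : ∀ t ∈ Set.Icc (0 : ℝ) T, IntervalIntegrable φ volume 0 t := by
    intro t ht
    apply ContinuousOn.intervalIntegrable
    rw [Set.uIcc_of_le ht.1]
    exact hφcont.mono (Set.Icc_subset_Icc le_rfl ht.2)
  set ψ : ℝ → ℝ := fun t => ∫ s in (0:ℝ)..t, φ s with hψdef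
  have hFTC : ∀ t ∈ Set.Icc (0 : ℝ) T, φ t ≤ 2 * K * ψ t := by
    intro t ht
    have heq : ∫ s in (0:ℝ)..t, deriv φ s = φ t - φ 0 := by
      apply intervalIntegral.integral_eq_sub_of_hasDerivAt
      · intro s hs
        rw [Set.uIcc_of_le ht.1] at hs
        exact (hφd s (Set.Icc_subset_Icc le_rfl ht.2 hs)).differentiableAt.hasDerivAt
      · exact hint t ht
    have hmono : (∫ s in (0:ℝ)..t, deriv φ s) ≤ ∫ s in (0:ℝ)..t, 2 * K * φ s := by
      apply intervalIntegral.integral_mono_ae_restrict ht.1 (hint t ht)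
        ((hφint t ht).const_mul (2 * K))
      filter_upwards [hae_b t ht] with s hs
      exact hs.1
    rw [intervalIntegral.integral_const_mul] at hmono
    rw [heq, hφ0, sub_zero] at hmono
    exact hmono
  have hψ0 : ψ 0 = 0 := intervalIntegral.integral_same
  have hψnonneg : ∀ t ∈ Set.Icc (0 : ℝ) T, 0 ≤ ψ t := fun t ht =>
    intervalIntegral.integral_nonneg ht.1 (fun s _ => hφnonneg s)
  have hψcont : ContinuousOn ψ (Set.Icc 0 T) := by
    have hIOn : IntegrableOn φ (Set.uIcc (0:ℝ) T) volume := by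
      rw [Set.uIcc_of_le hT.le]
      exact hφcont.integrableOn_Icc
    have := intervalIntegral.continuousOn_primitive_interval hIOn
    rwa [Set.uIcc_of_le hT.le] at this
  have hφcontOn : ContinuousOn φ (Set.Ioo (0:ℝ) T) := fun s hs =>
    ((hφd s (Set.Ioo_subset_Icc_self hs)).continuousAt).continuousWithinAt
  have hψd : ∀ t ∈ Set.Ioo (0 : ℝ) T, HasDerivAt ψ (φ t) t := by
    intro t ht
    exact intervalIntegral.integral_hasDerivAt_right (hφint t (Set.Ioo_subset_Icc_self ht))
      (hφcontOn.stronglyMeasurableAtFilter isOpen_Ioo t ht)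
      (hφd t (Set.Ioo_subset_Icc_self ht)).continuousAt
  -- Gronwall via antitone exp(-2Kt) ψ t
  set h : ℝ → ℝ := fun t => Real.exp (-(2 * K) * t) * ψ t with hhdef
  have hhd : ∀ t ∈ Set.Ioo (0 : ℝ) T,
      HasDerivAt h (-(2 * K) * Real.exp (-(2 * K) * t) * ψ t
        + Real.exp (-(2 * K) * t) * φ t) t := by
    intro t ht
    have he : HasDerivAt (fun t : ℝ => Real.exp (-(2 * K) * t)) (Real.exp (-(2 * K) * t) * -(2 * K)) t := by
      have hl : HasDerivAt (fun t : ℝ => -(2 * K) * t) (-(2 * K)) t := by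
        simpa using (hasDerivAt_id t).const_mul (-(2 * K))
      exact hl.exp
    have : HasDerivAt (fun t => Real.exp (-(2 * K) * t) * ψ t) _ t := he.mul (hψd t ht)
    convert this using 1
    ring
  have hanti : AntitoneOn h (Set.Icc 0 T) := by
    apply antitoneOn_of_deriv_nonpos (convex_Icc 0 T)
    · exact (Real.continuous_exp.comp (continuous_const.mul continuous_id)).continuousOn.mul hψcont
    · intro t ht
      rw [interior_Icc] at ht
      exact (hhd t ht).differentiableAt.differentiableWithinAt
    · intro t ht
      rw [interior_Icc] at ht
      rw [(hhd t ht).deriv]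
      have hle := hFTC t (Set.Ioo_subset_Icc_self ht)
      have hexp : 0 < Real.exp (-(2 * K) * t) := Real.exp_pos _
      nlinarith
  intro t ht
  have hht : h t ≤ h 0 := hanti (Set.left_mem_Icc.mpr hT.le) ht ht.1
  have hh0 : h 0 = 0 := by simp [hhdef, hψ0]
  have hψle : ψ t ≤ 0 := by
    have hexp : 0 < Real.exp (-(2 * K) * t) := Real.exp_pos _
    have hht' : Real.exp (-(2 * K) * t) * ψ t ≤ 0 := by rw [hh0] at hht; exact hht
    nlinarith [hht']
  have hψeq : ψ t = 0 := le_antisymm hψle (hψnonneg t ht)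
  have hφle : φ t ≤ 0 := by
    have := hFTC t ht
    rw [hψeq] at this
    simpa using this
  have hφeq : φ t = 0 := le_antisymm hφle (hφnonneg t)
  have hZ0 : Z t = 0 := by
    rw [hφdef] at hφeq
    exact inner_self_eq_zero.mp hφeq
  have : X₁ t - X₂ t = 0 := hZ0
  exact sub_eq_zero.mp this
end

section
/- Let F : ℝ^n → ℝ^n be maximal monotone with bounded values (|η| ≤ M for all η ∈ F(x), all x), and let F_λ denote its Yosida approximation. Let x_λ solve the ODE dx_λ/dt + A x_λ + F_λ(x_λ) = 0, x_λ(0) = x, with A ∈ L(ℝ^n). Then for all λ, μ > 0 and t ∈ [0,T]: |x_λ(t) - x_μ(t)|² ≤ C(λ + μ) for a constant C depending only on M, ‖A‖, T; hence (x_λ) converges uniformly on [0,T] as λ → 0. -/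
open RealInnerProductSpace

private theorem gb_le' (K e t T : ℝ) (hK : 0 ≤ K) (he : 0 ≤ e) (ht : 0 ≤ t) (htT : t ≤ T) :
    gronwallBound 0 K e t ≤ e * (T * Real.exp (K * T)) := by
  rcases eq_or_lt_of_le hK with hK0 | hKpos
  · rw [← hK0]
    simp only [gronwallBound_K0, zero_add, zero_mul]
    rw [Real.exp_zero]
    nlinarith
  · simp only [gronwallBound_of_K_ne_0 (ne_of_gt hKpos), zero_mul, zero_add]
    have h1 : Real.exp (K * t) - 1 ≤ K * t * Real.exp (K * t) := by
      have := Real.add_one_le_exp (-(K * t))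
      have hp := Real.exp_pos (K * t)
      have : Real.exp (-(K*t)) * Real.exp (K*t) = 1 := by
        rw [← Real.exp_add]; simp
      nlinarith
    have h2 : Real.exp (K * t) ≤ Real.exp (K * T) := by
      apply Real.exp_le_exp.2; nlinarith
    have hp := Real.exp_pos (K * t)
    have hp2 := Real.exp_pos (K * T)
    rw [div_mul_eq_mul_div, div_le_iff₀ hKpos]
    calc e * (Real.exp (K*t) - 1) ≤ e * (K * t * Real.exp (K*t)) := by nlinarith
      _ ≤ e * (T * Real.exp (K*T)) * K := by
          have h3 : t * Real.exp (K*t) ≤ T * Real.exp (K*T) :=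
            mul_le_mul htT h2 hp.le (ht.trans htT)
          nlinarith [mul_nonneg he hKpos.le]

/-- Yosida approximation estimate: if `x_λ` solves `dx_λ/dt + A x_λ + F_λ(x_λ) = 0`,
`x_λ(0) = x`, where `F_λ` is the Yosida approximation of a maximal monotone map `F` with
values bounded by `M`, then `‖x_λ(t) - x_μ(t)‖² ≤ C(λ + μ)` on `[0,T]`, and `x_λ`
converges uniformly on `[0,T]` as `λ → 0`. -/
theorem yosida_ode_convergence {n : ℕ}
    (T M : ℝ) (hT : 0 < T) (hM : 0 ≤ M)
    (A : EuclideanSpace ℝ (Fin n) →L[ℝ] EuclideanSpace ℝ (Fin n))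
    (F : EuclideanSpace ℝ (Fin n) → Set (EuclideanSpace ℝ (Fin n)))
    (hmono : ∀ x₁ x₂ ξ₁ ξ₂, ξ₁ ∈ F x₁ → ξ₂ ∈ F x₂ → ⟪ξ₁ - ξ₂, x₁ - x₂⟫ ≥ 0)
    (hbdd : ∀ x, ∀ ξ ∈ F x, ‖ξ‖ ≤ M)
    -- J lam is the resolvent (I + lam F)⁻¹ and Flam its Yosida approximation
    (J : ℝ → EuclideanSpace ℝ (Fin n) → EuclideanSpace ℝ (Fin n))
    (hJ : ∀ lam : ℝ, 0 < lam → ∀ z, ∃ ξ ∈ F (J lam z), J lam z + lam • ξ = z)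
    (Flam : ℝ → EuclideanSpace ℝ (Fin n) → EuclideanSpace ℝ (Fin n))
    (hFlam : ∀ lam : ℝ, 0 < lam → ∀ z, Flam lam z = lam⁻¹ • (z - J lam z))
    (x : EuclideanSpace ℝ (Fin n))
    (X : ℝ → ℝ → EuclideanSpace ℝ (Fin n))
    (hode : ∀ lam : ℝ, 0 < lam → ∀ t : ℝ,
      HasDerivAt (X lam) (-(A (X lam t)) - Flam lam (X lam t)) t)
    (hinit : ∀ lam : ℝ, 0 < lam → X lam 0 = x) :
    (∃ C : ℝ, 0 < C ∧ ∀ lam mu : ℝ, 0 < lam → 0 < mu → ∀ t ∈ Set.Icc (0 : ℝ) T,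
      ‖X lam t - X mu t‖ ^ 2 ≤ C * (lam + mu)) ∧
    (∃ Xlim : ℝ → EuclideanSpace ℝ (Fin n),
      TendstoUniformlyOn (fun lam => X lam) Xlim (nhdsWithin 0 (Set.Ioi 0))
        (Set.Icc 0 T)) := by
  -- Flam lam z is a value of F at the resolvent point
  have hmem : ∀ lam : ℝ, 0 < lam → ∀ z, Flam lam z ∈ F (J lam z) ∧
      z - J lam z = lam • Flam lam z := by
    intro lam hlam z
    obtain ⟨ξ, hξF, hξ⟩ := hJ lam hlam z
    have hz : z - J lam z = lam • ξ := (eq_sub_of_add_eq' hξ).symm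
    have hFl : Flam lam z = ξ := by
      rw [hFlam lam hlam z, hz, smul_smul, inv_mul_cancel₀ (ne_of_gt hlam), one_smul]
    exact ⟨hFl ▸ hξF, by rw [hFl]; exact hz⟩
  have hFbdd : ∀ lam : ℝ, 0 < lam → ∀ z, ‖Flam lam z‖ ≤ M := fun lam hlam z =>
    hbdd _ _ (hmem lam hlam z).1
  -- key monotonicity estimate
  have hkey : ∀ lam mu : ℝ, 0 < lam → 0 < mu → ∀ u v,
      ⟪Flam lam u - Flam mu v, u - v⟫ ≥ -((lam + mu) * M ^ 2) := by
    intro lam mu hlam hmu u v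
    obtain ⟨hξF, hu⟩ := hmem lam hlam u
    obtain ⟨hηF, hv⟩ := hmem mu hmu v
    set ξ := Flam lam u
    set η := Flam mu v
    have hsplit : u - v = (J lam u - J mu v) + (lam • ξ - mu • η) := by
      have : u - v = (u - J lam u) - (v - J mu v) + (J lam u - J mu v) := by abel
      rw [this, hu, hv]; abel
    have h1 : ⟪ξ - η, J lam u - J mu v⟫ ≥ 0 := hmono _ _ _ _ hξF hηF
    have hξη : ⟪ξ, η⟫ ≤ M ^ 2 := by
      calc ⟪ξ, η⟫ ≤ ‖ξ‖ * ‖η‖ := real_inner_le_norm ξ η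
        _ ≤ M * M := mul_le_mul (hFbdd lam hlam u) (hFbdd mu hmu v) (norm_nonneg _) hM
        _ = M ^ 2 := (sq M).symm
    have h2 : ⟪ξ - η, lam • ξ - mu • η⟫ ≥ -((lam + mu) * M ^ 2) := by
      have e1 : ⟪ξ - η, lam • ξ - mu • η⟫ =
          lam * ⟪ξ, ξ⟫ - mu * ⟪ξ, η⟫ - lam * ⟪η, ξ⟫ + mu * ⟪η, η⟫ := by
        rw [inner_sub_left, inner_sub_right, inner_sub_right,
          real_inner_smul_right, real_inner_smul_right,
          real_inner_smul_right, real_inner_smul_right]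
        ring
      rw [e1]
      have hηξ : ⟪η, ξ⟫ ≤ M ^ 2 := by rw [real_inner_comm]; exact hξη
      have hξξ : (0:ℝ) ≤ ⟪ξ, ξ⟫ := real_inner_self_nonneg
      have hηη : (0:ℝ) ≤ ⟪η, η⟫ := real_inner_self_nonneg
      nlinarith
    calc ⟪ξ - η, u - v⟫ = ⟪ξ - η, J lam u - J mu v⟫ + ⟪ξ - η, lam • ξ - mu • η⟫ := by
          rw [hsplit, inner_add_right]
      _ ≥ -((lam + mu) * M ^ 2) := by linarith
  -- the estimate
  set K : ℝ := 2 * ‖A‖ with hK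
  have hK0 : 0 ≤ K := by positivity
  set C : ℝ := 2 * M ^ 2 * (T * Real.exp (K * T)) + 1 with hCdef
  have hC : 0 < C := by positivity
  have main : ∀ lam mu : ℝ, 0 < lam → 0 < mu → ∀ t ∈ Set.Icc (0 : ℝ) T,
      ‖X lam t - X mu t‖ ^ 2 ≤ C * (lam + mu) := by
    intro lam mu hlam hmu t ht
    set f : ℝ → EuclideanSpace ℝ (Fin n) := fun t => X lam t - X mu t with hf
    set g : ℝ → EuclideanSpace ℝ (Fin n) := fun t =>
      -(A (f t)) - (Flam lam (X lam t) - Flam mu (X mu t)) with hg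
    have hfd : ∀ s : ℝ, HasDerivAt f (g s) s := by
      intro s
      have := (hode lam hlam s).sub (hode mu hmu s)
      have e : g s = -(A (X lam s)) - Flam lam (X lam s) - (-(A (X mu s)) - Flam mu (X mu s)) := by
        simp only [hg, hf, map_sub]
        abel
      rw [e]; exact this
    set φ : ℝ → ℝ := fun s => ‖f s‖ ^ 2 with hφ
    have hφd : ∀ s : ℝ, HasDerivAt φ (2 * ⟪g s, f s⟫) s := by
      intro s
      have h := (hfd s).inner ℝ (hfd s)
      have heq : (fun s => ⟪f s, f s⟫) = φ := by
        funext s; rw [real_inner_self_eq_norm_sq]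
      rw [heq] at h
      have e : 2 * ⟪g s, f s⟫ = ⟪f s, g s⟫ + ⟪g s, f s⟫ := by
        rw [real_inner_comm (f s) (g s)]
        ring
      rw [e]; exact h
    have hbound : ∀ s ∈ Set.Ico (0:ℝ) T,
        2 * ⟪g s, f s⟫ ≤ K * φ s + 2 * M ^ 2 * (lam + mu) := by
      intro s _
      have e1 : ⟪g s, f s⟫ = ⟪-(A (f s)), f s⟫
          - ⟪Flam lam (X lam s) - Flam mu (X mu s), X lam s - X mu s⟫ := by
        simp only [hg, hf, inner_sub_left]
      have e2 : ⟪-(A (f s)), f s⟫ ≤ ‖A‖ * ‖f s‖ ^ 2 := by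
        calc ⟪-(A (f s)), f s⟫ ≤ ‖-(A (f s))‖ * ‖f s‖ := real_inner_le_norm _ _
          _ = ‖A (f s)‖ * ‖f s‖ := by rw [norm_neg]
          _ ≤ (‖A‖ * ‖f s‖) * ‖f s‖ :=
              mul_le_mul_of_nonneg_right (A.le_opNorm _) (norm_nonneg _)
          _ = ‖A‖ * ‖f s‖ ^ 2 := by ring
      have e3 := hkey lam mu hlam hmu (X lam s) (X mu s)
      rw [e1]
      simp only [hφ, hK]
      nlinarith
    have hfc : Continuous f := continuous_iff_continuousAt.2 fun s => (hfd s).continuousAt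
    have hcont : ContinuousOn φ (Set.Icc 0 T) := ((hfc.norm.pow 2).continuousOn)
    have hslope : ∀ s ∈ Set.Ico (0:ℝ) T, ∀ r, (fun s => 2 * ⟪g s, f s⟫) s < r →
        ∃ᶠ z in nhdsWithin s (Set.Ioi s), (z - s)⁻¹ * (φ z - φ s) < r := by
      intro s _ r hr
      have hds := (hφd s).hasDerivWithinAt (s := Set.Ioi s)
      rw [hasDerivWithinAt_iff_tendsto_slope' (by simp : s ∉ Set.Ioi s)] at hds
      have hev : ∀ᶠ z in nhdsWithin s (Set.Ioi s), slope φ s z < r :=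
        hds (Iio_mem_nhds hr)
      apply Filter.Eventually.frequently
      filter_upwards [hev] with z hz
      rwa [slope_def_field, div_eq_inv_mul] at hz
    have ha : φ 0 ≤ 0 := by
      simp only [hφ, hf]
      rw [hinit lam hlam, hinit mu hmu, sub_self]
      simp
    have hgr := le_gronwallBound_of_liminf_deriv_right_le (δ := 0) hcont hslope ha hbound t ht
    have := gb_le' K (2 * M ^ 2 * (lam + mu)) t T hK0 (by positivity) ht.1 ht.2
    rw [sub_zero] at hgr
    calc φ t ≤ gronwallBound 0 K (2 * M ^ 2 * (lam + mu)) t := hgr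
      _ ≤ 2 * M ^ 2 * (lam + mu) * (T * Real.exp (K * T)) := this
      _ ≤ C * (lam + mu) := by rw [hCdef]; nlinarith
  refine ⟨⟨C, hC, main⟩, ?_⟩
  -- uniform Cauchy
  set l : Filter ℝ := nhdsWithin 0 (Set.Ioi 0) with hl
  have hUC : UniformCauchySeqOn (fun lam => X lam) l (Set.Icc 0 T) := by
    intro u hu
    obtain ⟨ε, hε, hdist⟩ := Metric.mem_uniformity_dist.1 hu
    set δ : ℝ := ε ^ 2 / (4 * C) with hδdef
    have hδ : 0 < δ := by positivity
    have hmemδ : Set.Ioo (0:ℝ) δ ∈ l := Ioo_mem_nhdsGT_of_mem ⟨le_refl 0, hδ⟩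
    filter_upwards [Filter.prod_mem_prod hmemδ hmemδ] with p hp t ht
    obtain ⟨⟨hp1, hp1'⟩, ⟨hp2, hp2'⟩⟩ := hp
    apply hdist
    have hest := main p.1 p.2 hp1 hp2 t ht
    have : ‖X p.1 t - X p.2 t‖ ^ 2 < ε ^ 2 := by
      calc ‖X p.1 t - X p.2 t‖ ^ 2 ≤ C * (p.1 + p.2) := hest
        _ < C * (2 * δ) := by nlinarith
        _ = ε ^ 2 / 2 := by rw [hδdef]; field_simp; ring
        _ < ε ^ 2 := by nlinarith
    rw [dist_eq_norm]
    exact lt_of_pow_lt_pow_left₀ 2 hε.le this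
  have hptwise : ∀ t ∈ Set.Icc (0:ℝ) T,
      ∃ y, Filter.Tendsto (fun lam => X lam t) l (nhds y) := by
    intro t ht
    have hcau : Cauchy (Filter.map (fun lam => X lam t) l) := hUC.cauchy_map ht
    exact cauchy_map_iff_exists_tendsto.1 hcau
  classical
  refine ⟨fun t => if h : t ∈ Set.Icc (0:ℝ) T then (hptwise t h).choose else x, ?_⟩
  apply hUC.tendstoUniformlyOn_of_tendsto
  intro t ht
  rw [dif_pos ht]
  exact (hptwise t ht).choose_spec
end

section
/- Let C* > 0 and let f : [0,∞) → [0,∞) satisfy, for all 0 ≤ s ≤ t: e^{-C*t} f(t) + K ∫_s^t e^{-C*r} 1_{f(r) ≠ 0} dr ≤ e^{-C*s} f(s) + (e^{-C*s} - e^{-C*t}) Y, where K > 0, Y ≥ 0 are constants. If f is continuous and f(t₀) = 0 for some t₀, then f(t) = 0 for all t ≥ t₀ (provided K > C* Y). -/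
/-- Absorption property: if `f ≥ 0` is continuous, satisfies for all `0 ≤ s ≤ t`
`e^{-C*t} f(t) + K ∫_s^t e^{-C*r} 1_{f(r)≠0} dr ≤ e^{-C*s} f(s) + (e^{-C*s} - e^{-C*t}) Y`
with `K > C*Y`, and `f(t₀) = 0`, then `f(t) = 0` for all `t ≥ t₀`. -/
theorem absorption
    (C K Y : ℝ) (hC : 0 < C) (hK : 0 < K) (hY : 0 ≤ Y)
    (f : ℝ → ℝ) (hcont : Continuous f) (hnonneg : ∀ t, 0 ≤ t → 0 ≤ f t)
    (hineq : ∀ s t : ℝ, 0 ≤ s → s ≤ t →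
      Real.exp (-C * t) * f t +
        K * ∫ r in s..t, Real.exp (-C * r) * (if f r ≠ 0 then 1 else 0) ≤
      Real.exp (-C * s) * f s + (Real.exp (-C * s) - Real.exp (-C * t)) * Y)
    (hKY : K > C * Y)
    (t₀ : ℝ) (ht₀ : 0 ≤ t₀) (hf₀ : f t₀ = 0) :
    ∀ t, t₀ ≤ t → f t = 0 := by
  intro t ht
  by_contra hft
  have hftpos : 0 < f t := lt_of_le_of_ne (hnonneg t (ht₀.trans ht)) (Ne.symm hft)
  -- the set of zeros of f in [t₀, t]
  set S : Set ℝ := {s | s ∈ Set.Icc t₀ t ∧ f s = 0} with hS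
  have hSne : S.Nonempty := ⟨t₀, ⟨le_refl _, ht⟩, hf₀⟩
  have hSbdd : BddAbove S := ⟨t, fun x hx => hx.1.2⟩
  have hSclosed : IsClosed S := by
    have : S = Set.Icc t₀ t ∩ f ⁻¹' {0} := by
      ext x; simp [hS, Set.mem_Icc, and_comm]
    rw [this]
    exact isClosed_Icc.inter (isClosed_singleton.preimage hcont)
  set s₁ := sSup S with hs₁
  have hs₁mem : s₁ ∈ S := hSclosed.csSup_mem hSne hSbdd
  have hfs₁ : f s₁ = 0 := hs₁mem.2
  have hs₁le : s₁ ≤ t := hs₁mem.1.2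
  have ht₀s₁ : t₀ ≤ s₁ := hs₁mem.1.1
  have hs₁lt : s₁ < t := lt_of_le_of_ne hs₁le (fun h => hft (h ▸ hfs₁))
  -- on (s₁, t], f ≠ 0
  have hne : ∀ r ∈ Set.Ioc s₁ t, f r ≠ 0 := by
    intro r hr hr0
    have : r ∈ S := ⟨⟨ht₀s₁.trans hr.1.le, hr.2⟩, hr0⟩
    exact absurd (le_csSup hSbdd this) (not_le.mpr hr.1)
  -- compute the integral
  have hint : (∫ r in s₁..t, Real.exp (-C * r) * (if f r ≠ 0 then 1 else 0))
      = ∫ r in s₁..t, Real.exp (-C * r) := by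
    apply intervalIntegral.integral_congr_ae
    filter_upwards with r hr
    rw [Set.uIoc_of_le hs₁le] at hr
    simp [hne r hr]
  have hexp : (∫ r in s₁..t, Real.exp (-C * r))
      = (Real.exp (-C * s₁) - Real.exp (-C * t)) / C := by
    have h1 : ∀ r ∈ Set.uIcc s₁ t,
        HasDerivAt (fun x => -Real.exp (-C * x) / C) (Real.exp (-C * r)) r := by
      intro r _
      have h2 : HasDerivAt (fun x => -C * x) (-C) r := by
        simpa using (hasDerivAt_id r).const_mul (-C)
      have h3 := (h2.exp).neg.div_const C
      exact h3.congr_deriv (by rw [div_eq_iff hC.ne']; ring)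
    have h4 := intervalIntegral.integral_eq_sub_of_hasDerivAt h1
      ((Real.continuous_exp.comp (continuous_const.mul continuous_id)).intervalIntegrable _ _)
    rw [h4]
    ring
  have hΔ : 0 < Real.exp (-C * s₁) - Real.exp (-C * t) := by
    have : -C * t < -C * s₁ := by nlinarith
    have := Real.exp_lt_exp.mpr this
    linarith
  have hmain := hineq s₁ t (ht₀.trans ht₀s₁) hs₁le
  rw [hint, hexp, hfs₁] at hmain
  have hexppos : 0 < Real.exp (-C * t) := Real.exp_pos _
  set Δ := Real.exp (-C * s₁) - Real.exp (-C * t)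
  have hKC : Y < K / C := by
    rw [lt_div_iff₀ hC]; nlinarith
  have : Real.exp (-C * t) * f t ≤ Δ * Y - K * (Δ / C) := by linarith
  have h5 : Δ * Y - K * (Δ / C) < 0 := by
    have h6 : K * (Δ / C) = (K / C) * Δ := by ring
    have h7 := mul_lt_mul_of_pos_right hKC hΔ
    nlinarith
  nlinarith
end
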